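/- Any single random variable Z taking values in a set of size at most S can correctly predict a uniformly random bit string x ∈ {0,1}ⁿ coordinate-wise with per-coordinate success probability at least 1/2 + γ for all coordinates only if n ≤ log₂(S)/(1 − h(1/2 − γ)), where h is binary entropy. -/
import Mathlib


open Finset

/-- Binary entropy function (base 2). -/
noncomputable def binEnt (p : ℝ) : ℝ :=
  -(p * Real.logb 2 p) - (1 - p) * Real.logb 2 (1 - p)

lemma sum_pow_agree (n : ℕ) (l : ℝ) (y : Fin n → Bool) :
    ∑ x : Fin n → Bool, l ^ (univ.filter fun i => x i = y i).card = (1 + l) ^ n := by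
  have h1 : ∀ x : Fin n → Bool,
      l ^ (univ.filter fun i => x i = y i).card
        = ∏ i : Fin n, (if x i = y i then l else 1) := by
    intro x
    rw [Finset.prod_ite, Finset.prod_const, Finset.prod_const_one, mul_one]
  simp only [h1]
  have := (Fintype.prod_sum (κ := fun _ : Fin n => Bool)
    (fun i (b : Bool) => if b = y i then l else 1)).symm
  rw [this]
  have h2 : ∀ i : Fin n, (∑ b : Bool, if b = y i then l else 1) = 1 + l := by
    intro i; cases hyi : y i <;> simp [Fintype.sum_bool, hyi] <;> ring
  rw [Finset.prod_congr rfl fun i _ => h2 i, Finset.prod_const, Finset.card_univ,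
    Fintype.card_fin]

/-- A variable `Z = f x` ranging in a set of size at most `S` that predicts each
coordinate of a uniform `x ∈ {0,1}ⁿ` with success probability at least `1/2+γ`
forces `n ≤ log₂ S / (1 − h(1/2 − γ))`. -/
theorem stmt5 {F : Type*} [Fintype F] (n S : ℕ) (hS : Fintype.card F ≤ S)
    (f : (Fin n → Bool) → F) (g : Fin n → F → Bool) (γ : ℝ)
    (hγ0 : 0 < γ) (hγ1 : γ < 1 / 2)
    (hg : ∀ i : Fin n,
      1 / 2 + γ ≤
        ((univ.filter (fun x : Fin n → Bool => g i (f x) = x i)).card : ℝ) / 2 ^ n) :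
    (n : ℝ) ≤ Real.logb 2 S / (1 - binEnt (1 / 2 - γ)) := by
  classical
  set p : ℝ := 1 / 2 + γ with hp
  set q : ℝ := 1 / 2 - γ with hq
  have hq0 : 0 < q := by rw [hq]; linarith
  have hq1 : q < 1 / 2 := by rw [hq]; linarith
  have hp1 : p < 1 := by rw [hp]; linarith
  have hp0 : 0 < p := by rw [hp]; linarith
  have hpq : p + q = 1 := by rw [hp, hq]; ring
  set l : ℝ := p / q with hl
  have hqp : q < p := by rw [hp, hq]; linarith
  have hl1 : 1 < l := (one_lt_div hq0).2 hqp
  have hl0 : 0 < l := by linarith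
  set L : ℝ := Real.log l with hL
  have hL0 : 0 ≤ L := Real.log_nonneg hl1.le
  set a : (Fin n → Bool) → ℕ :=
    fun x => (univ.filter fun i => g i (f x) = x i).card with ha
  -- Step 1: ∑ x, l ^ a x ≤ S * (1+l)^n
  have step1 : ∑ x : Fin n → Bool, l ^ a x ≤ (S : ℝ) * (1 + l) ^ n := by
    have hfib := Finset.sum_fiberwise_of_maps_to
      (s := (univ : Finset (Fin n → Bool))) (t := (univ : Finset F))
      (g := f) (fun _ _ => Finset.mem_univ _) (fun x => l ^ a x)
    rw [← hfib]
    have hbound : ∀ z : F,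
        ∑ x ∈ univ.filter (fun x => f x = z), l ^ a x ≤ (1 + l) ^ n := by
      intro z
      have heq : ∀ x ∈ univ.filter (fun x => f x = z),
          l ^ a x = l ^ (univ.filter fun i => x i = g i z).card := by
        intro x hx
        rw [Finset.mem_filter] at hx
        have : a x = (univ.filter fun i => x i = g i z).card := by
          show (univ.filter fun i => g i (f x) = x i).card = _
          congr 1
          apply Finset.filter_congr
          intro i _
          simp only [hx.2]
          exact eq_comm
        rw [this]
      rw [Finset.sum_congr rfl heq]
      calc ∑ x ∈ univ.filter (fun x => f x = z), l ^ (univ.filter fun i => x i = g i z).card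
          ≤ ∑ x : Fin n → Bool, l ^ (univ.filter fun i => x i = g i z).card :=
            Finset.sum_le_sum_of_subset_of_nonneg (Finset.filter_subset _ _)
              (fun x _ _ => by positivity)
        _ = (1 + l) ^ n := sum_pow_agree n l (fun i => g i z)
    calc ∑ z : F, ∑ x ∈ univ.filter (fun x => f x = z), l ^ a x
        ≤ ∑ _z : F, (1 + l) ^ n := Finset.sum_le_sum fun z _ => hbound z
      _ = (Fintype.card F : ℝ) * (1 + l) ^ n := by
          rw [Finset.sum_const, Finset.card_univ, nsmul_eq_mul]
      _ ≤ (S : ℝ) * (1 + l) ^ n := by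
          apply mul_le_mul_of_nonneg_right _ (by positivity)
          exact_mod_cast hS
  -- Step 3: ∑ x, (a x : ℝ) ≥ n * p * 2^n
  have step3 : (n : ℝ) * p * 2 ^ n ≤ ∑ x : Fin n → Bool, (a x : ℝ) := by
    have h1 : ∀ x : Fin n → Bool,
        (a x : ℝ) = ∑ i : Fin n, if g i (f x) = x i then (1 : ℝ) else 0 := by
      intro x
      show (((univ.filter fun i => g i (f x) = x i).card : ℕ) : ℝ) = _
      rw [Finset.card_filter]
      push_cast
      rfl
    have h2 : ∀ i : Fin n,
        ((univ.filter (fun x : Fin n → Bool => g i (f x) = x i)).card : ℝ)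
          = ∑ x : Fin n → Bool, if g i (f x) = x i then (1 : ℝ) else 0 := by
      intro i
      rw [Finset.card_filter]
      push_cast
      rfl
    have hswap : ∑ x : Fin n → Bool, (a x : ℝ)
        = ∑ i : Fin n,
            ((univ.filter (fun x : Fin n → Bool => g i (f x) = x i)).card : ℝ) := by
      simp only [h1]
      rw [Finset.sum_comm]
      exact Finset.sum_congr rfl fun i _ => (h2 i).symm
    rw [hswap]
    have hbd : ∀ i : Fin n,
        p * 2 ^ n ≤
          ((univ.filter (fun x : Fin n → Bool => g i (f x) = x i)).card : ℝ) := by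
      intro i
      have hgi := hg i
      have h2 : (0 : ℝ) < 2 ^ n := by positivity
      rw [le_div_iff₀ h2] at hgi
      exact hgi
    calc (n : ℝ) * p * 2 ^ n = ∑ _i : Fin n, p * 2 ^ n := by
          rw [Finset.sum_const, Finset.card_univ, Fintype.card_fin, nsmul_eq_mul]; ring
      _ ≤ _ := Finset.sum_le_sum fun i _ => hbd i
  have hcard : ((univ : Finset (Fin n → Bool)).card : ℝ) = 2 ^ n := by
    rw [Finset.card_univ, Fintype.card_fun]
    simp
  -- Step 2: 2^n * exp(n*p*L) ≤ ∑ x, l ^ a x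
  have step2 : (2 : ℝ) ^ n * Real.exp ((n : ℝ) * p * L) ≤ ∑ x : Fin n → Bool, l ^ a x := by
    have hpt : ∀ x : Fin n → Bool,
        Real.exp ((n : ℝ) * p * L) * (1 + ((a x : ℝ) - (n : ℝ) * p) * L) ≤ l ^ a x := by
      intro x
      have hx : (l : ℝ) ^ a x = Real.exp ((a x : ℝ) * L) := by
        rw [hL, ← Real.log_pow, Real.exp_log (by positivity)]
      rw [hx]
      have h1 : ((a x : ℝ) - (n : ℝ) * p) * L + 1
          ≤ Real.exp (((a x : ℝ) - (n : ℝ) * p) * L) := Real.add_one_le_exp _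
      calc Real.exp ((n : ℝ) * p * L) * (1 + ((a x : ℝ) - (n : ℝ) * p) * L)
          ≤ Real.exp ((n : ℝ) * p * L) * Real.exp (((a x : ℝ) - (n : ℝ) * p) * L) := by
            apply mul_le_mul_of_nonneg_left _ (Real.exp_pos _).le
            linarith
        _ = Real.exp ((a x : ℝ) * L) := by rw [← Real.exp_add]; congr 1; ring
    have hsum : ∑ x : Fin n → Bool,
        Real.exp ((n : ℝ) * p * L) * (1 + ((a x : ℝ) - (n : ℝ) * p) * L)
        = Real.exp ((n : ℝ) * p * L) *
          ((2 : ℝ) ^ n + ((∑ x : Fin n → Bool, (a x : ℝ)) - 2 ^ n * ((n : ℝ) * p)) * L) := by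
      rw [← Finset.mul_sum]
      congr 1
      rw [Finset.sum_add_distrib, ← Finset.sum_mul, Finset.sum_sub_distrib,
        Finset.sum_const, Finset.sum_const, nsmul_eq_mul, nsmul_eq_mul, hcard,
        mul_one]
    have hnn : 0 ≤ ((∑ x : Fin n → Bool, (a x : ℝ)) - 2 ^ n * ((n : ℝ) * p)) * L := by
      apply mul_nonneg _ hL0
      have h := step3
      nlinarith
    calc (2 : ℝ) ^ n * Real.exp ((n : ℝ) * p * L)
        ≤ ∑ x : Fin n → Bool,
            Real.exp ((n : ℝ) * p * L) * (1 + ((a x : ℝ) - (n : ℝ) * p) * L) := by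
          rw [hsum]
          nlinarith [Real.exp_pos ((n : ℝ) * p * L), hnn]
      _ ≤ ∑ x : Fin n → Bool, l ^ a x := Finset.sum_le_sum fun x _ => hpt x
  -- Combine: 2^n * exp(n p L) ≤ S * (1+l)^n
  have key : (2 : ℝ) ^ n * Real.exp ((n : ℝ) * p * L) ≤ (S : ℝ) * (1 + l) ^ n :=
    le_trans step2 step1
  clear_value p q l L a
  -- S ≥ 1
  have hF : Nonempty F := ⟨f (fun _ => false)⟩
  have hS1 : 1 ≤ S := le_trans Fintype.card_pos hS
  have hSpos : (0 : ℝ) < S := by exact_mod_cast Nat.lt_of_lt_of_le Nat.zero_lt_one hS1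
  -- 1 + l = 1/q
  have h1l : 1 + l = 1 / q := by
    rw [hl]; field_simp; linarith
  -- take logs
  have hlog : (n : ℝ) * Real.log 2 + (n : ℝ) * p * L ≤ Real.log S - (n : ℝ) * Real.log q := by
    have hlhs : Real.log ((2 : ℝ) ^ n * Real.exp ((n : ℝ) * p * L))
        = (n : ℝ) * Real.log 2 + (n : ℝ) * p * L := by
      rw [Real.log_mul (by positivity) (Real.exp_ne_zero _), Real.log_pow,
        Real.log_exp]
    have hrhs : Real.log ((S : ℝ) * (1 + l) ^ n)
        = Real.log S - (n : ℝ) * Real.log q := by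
      rw [Real.log_mul (ne_of_gt hSpos) (by positivity), Real.log_pow, h1l,
        Real.log_div one_ne_zero (ne_of_gt hq0), Real.log_one]
      push_cast
      ring
    rw [← hlhs, ← hrhs]
    exact Real.log_le_log (by positivity) key
  -- rewrite: n * (log 2 + p log p + q log q) ≤ log S
  have hLval : L = Real.log p - Real.log q := by
    rw [hL, hl]; exact Real.log_div (ne_of_gt hp0) (ne_of_gt hq0)
  set c : ℝ := Real.log 2 + p * Real.log p + q * Real.log q with hc
  clear_value c
  have hq' : q = 1 - p := by linarith
  have hmain : (n : ℝ) * c ≤ Real.log S := by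
    have h1 : (n : ℝ) * p * L = (n : ℝ) * p * Real.log p - (n : ℝ) * p * Real.log q := by
      rw [hLval]; ring
    have h2 : (n : ℝ) * c = (n : ℝ) * Real.log 2 + (n : ℝ) * p * Real.log p
        + (n : ℝ) * q * Real.log q := by rw [hc]; ring
    have h3 : (n : ℝ) * q * Real.log q
        = (n : ℝ) * Real.log q - (n : ℝ) * p * Real.log q := by
      rw [hq']; ring
    linarith
  -- c > 0 via strict convexity of x log x
  have hcpos : 0 < c := by
    have hconv := Real.strictConvexOn_mul_log.2
      (Set.mem_Ici.2 hq0.le) (Set.mem_Ici.2 hp0.le)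
      (by intro h; rw [hq, hp] at h; linarith) 
      (by norm_num : (0:ℝ) < 1/2) (by norm_num : (0:ℝ) < 1/2) (by norm_num)
    simp only [smul_eq_mul] at hconv
    have hmid : (1:ℝ)/2 * q + 1/2 * p = 1/2 := by linarith
    rw [hmid] at hconv
    have hhalf : ((1:ℝ)/2) * Real.log (1/2) = -(1/2) * Real.log 2 := by
      rw [Real.log_div one_ne_zero two_ne_zero, Real.log_one]; ring
    rw [hhalf] at hconv
    rw [hc]; linarith [hconv]
  -- relate c to 1 - binEnt q and logb
  have hlog2 : (0 : ℝ) < Real.log 2 := Real.log_pos (by norm_num)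
  have hbe : 1 - binEnt q = c / Real.log 2 := by
    have hq'' : 1 - q = p := by linarith
    rw [binEnt, hq'', Real.logb, Real.logb, hc]
    field_simp
    ring
  rw [hbe, le_div_iff₀ (div_pos hcpos hlog2), Real.logb,
    mul_div_assoc']
  exact (div_le_div_iff_of_pos_right hlog2).2 hmain
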